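/- Let $\zeta_3 = e^{2\pi i/3}$ and let $Q(x,t)$ be the deformed ADO$_3$ polynomial of $T(2,7)$ defined by $Q(x,t) = (tx)^6 + \frac{\zeta_3^{-1}}{t}(tx)^5 + \left(\frac{\zeta_3}{t^2}-\zeta_3^{-1}\right)(tx)^4 - \frac{\zeta_3}{t}(tx)^3 - \frac{1}{t^2}(tx)^2 + 1 - \frac{\zeta_3^{-1}}{t^2}\frac{1}{(tx)^2} - \frac{\zeta_3}{t}\frac{1}{(tx)^3} + \left(\frac{\zeta_3^{-1}}{t^2}-1\right)\frac{1}{(tx)^4} + \frac{\zeta_3}{t}\frac{1}{(tx)^5} + \frac{1}{(tx)^6}$. Then $Q$ satisfies the $t$-deformed Weyl symmetry $Q(1/x, t) = Q(\zeta_3^{-2} t^{-2} x, t)$ as an identity of rational functions. -/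

import Mathlib

set_option maxHeartbeats 1000000

private lemma ado3_key (ζ t u : ℂ) (hζ3 : ζ ^ 3 = 1) (hζ0 : ζ ≠ 0) (ht : t ≠ 0)
    (hu : u ≠ 0) :
    u^6 + ζ⁻¹/t*u^5 + (ζ/t^2 - ζ⁻¹)*u^4 - ζ/t*u^3
        - 1/t^2*u^2 + 1 - ζ⁻¹/t^2*(1/u^2) - ζ/t*(1/u^3)
        + (ζ⁻¹/t^2 - 1)*(1/u^4) + ζ/t*(1/u^5) + 1/u^6
    = (ζ/u)^6 + ζ⁻¹/t*(ζ/u)^5 + (ζ/t^2 - ζ⁻¹)*(ζ/u)^4 - ζ/t*(ζ/u)^3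
        - 1/t^2*(ζ/u)^2 + 1 - ζ⁻¹/t^2*(1/(ζ/u)^2) - ζ/t*(1/(ζ/u)^3)
        + (ζ⁻¹/t^2 - 1)*(1/(ζ/u)^4) + ζ/t*(1/(ζ/u)^5) + 1/(ζ/u)^6 := by
  have e6 : (ζ/u)^6 = 1/u^6 := by field_simp; linear_combination ((ζ^3+1))*hζ3
  have e5 : ζ⁻¹/t*(ζ/u)^5 = ζ/t*(1/u^5) := by field_simp; linear_combination hζ3
  have e4 : (ζ/t^2 - ζ⁻¹)*(ζ/u)^4 = (ζ⁻¹/t^2 - 1)*(1/u^4) := by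
    field_simp; linear_combination (ζ^3+1-ζ*t^2)*hζ3
  have e3 : ζ/t*(ζ/u)^3 = ζ/t*(1/u^3) := by field_simp; linear_combination ((1:ℂ))*hζ3
  have e2 : 1/t^2*(ζ/u)^2 = ζ⁻¹/t^2*(1/u^2) := by field_simp; linear_combination hζ3
  have f2 : ζ⁻¹/t^2*(1/(ζ/u)^2) = 1/t^2*u^2 := by field_simp; linear_combination (-1:ℂ)*hζ3
  have f3 : ζ/t*(1/(ζ/u)^3) = ζ/t*u^3 := by field_simp; linear_combination (-1:ℂ)*hζ3
  have f4 : (ζ⁻¹/t^2 - 1)*(1/(ζ/u)^4) = (ζ/t^2 - ζ⁻¹)*u^4 := by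
    field_simp; linear_combination (-(ζ^3+1)+ζ*t^2)*hζ3
  have f5 : ζ/t*(1/(ζ/u)^5) = ζ⁻¹/t*u^5 := by field_simp; linear_combination (-1:ℂ)*hζ3
  have f6 : 1/(ζ/u)^6 = u^6 := by field_simp; linear_combination (-(ζ^3+1))*hζ3
  rw [f6, f5, f4, f3, f2, e6, e5, e4, e3, e2]
  ring

open Complex in
/-- The `t`-deformed `ADO₃` polynomial `Q(x,t)` of `T(2,7)` satisfies the
`t`-deformed Weyl symmetry `Q(1/x,t) = Q(ζ₃⁻²t⁻²x, t)`. -/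
theorem deformed_ADO3_T27_weyl_symmetry
    (ζ : ℂ) (hζ : ζ = Complex.exp (2 * Real.pi * I / 3))
    (Q : ℂ → ℂ → ℂ)
    (hQ : ∀ x t : ℂ, Q x t =
      (t*x)^6 + ζ⁻¹/t*(t*x)^5 + (ζ/t^2 - ζ⁻¹)*(t*x)^4 - ζ/t*(t*x)^3
        - 1/t^2*(t*x)^2 + 1 - ζ⁻¹/t^2*(1/(t*x)^2) - ζ/t*(1/(t*x)^3)
        + (ζ⁻¹/t^2 - 1)*(1/(t*x)^4) + ζ/t*(1/(t*x)^5) + 1/(t*x)^6) :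
    ∀ x t : ℂ, x ≠ 0 → t ≠ 0 → Q (1/x) t = Q ((ζ^2)⁻¹ * (t^2)⁻¹ * x) t := by
  have hζ3 : ζ ^ 3 = 1 := by
    rw [hζ, ← Complex.exp_nat_mul]
    rw [show (3 : ℕ) * (2 * (Real.pi : ℂ) * I / 3) = 2 * Real.pi * I by push_cast; ring]
    exact Complex.exp_two_pi_mul_I
  have hζ0 : ζ ≠ 0 := by
    intro h; rw [h] at hζ3; norm_num at hζ3
  intro x t hx ht
  rw [hQ, hQ]
  have h1 : t * (1/x) = t/x := mul_one_div t x
  have h2 : t * ((ζ^2)⁻¹ * (t^2)⁻¹ * x) = ζ/(t/x) := by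
    field_simp
    linear_combination (-1:ℂ)*hζ3
  rw [h1, h2]
  exact ado3_key ζ t (t/x) hζ3 hζ0 ht (div_ne_zero ht hx)
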